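/- Let n≥3 be odd and u ∈ F_{3^n}\F_3 with χ(u+1)≠χ(u-1). With g₁(z)=-(u+1)z, g₃(z)=z(z-1+u), g₄(z)=z²-z+u², we have ∑_{z∈F_{3^n}} χ(g₃(z)g₄(z)) + ∑_{z∈F_{3^n}} χ(g₁(z)g₃(z)g₄(z)) = -2. -/

import Mathlib

open Finset

section AuxChi

variable {F : Type*} [Field F] [Fintype F] [DecidableEq F]

private lemma chi_sq_mul (t X : F) (ht : t ≠ 0) :
    quadraticChar F (t ^ 2 * X) = quadraticChar F X := by
  rw [map_mul, quadraticChar_sq_one' ht, one_mul]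

private lemma chi_of_pow4 (t : F) {X Y : F} (ht : t ≠ 0) (h : t ^ 4 * X = Y) :
    quadraticChar F X = quadraticChar F Y := by
  have h2 : (t ^ 2) ^ 2 * X = Y := by rw [← h]; ring
  rw [← h2, chi_sq_mul _ _ (pow_ne_zero 2 ht)]

private lemma chi_cube (X : F) : quadraticChar F (X ^ 3) = quadraticChar F X := by
  rcases quadraticChar_isQuadratic F X with h | h | h <;>
    rw [map_pow, h] <;> norm_num

end AuxChi

theorem stmt_12 (n : ℕ) (hn : 3 ≤ n) (hodd : Odd n)
    (F : Type*) [Field F] [Fintype F] [DecidableEq F]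
    (hcard : Fintype.card F = 3 ^ n)
    (u : F) (hu : u ^ 3 ≠ u)
    (huu : quadraticChar F (u + 1) ≠ quadraticChar F (u - 1)) :
    (∑ z : F, quadraticChar F ((z * (z - 1 + u)) * (z ^ 2 - z + u ^ 2))) +
      (∑ z : F, quadraticChar F
        ((-(u + 1) * z) * (z * (z - 1 + u)) * (z ^ 2 - z + u ^ 2))) = -2 := by
  classical
  -- characteristic three
  haveI : CharP F (ringChar F) := ringChar.charP F
  obtain ⟨m, hp, hFm⟩ := FiniteField.card F (ringChar F)
  have hr3 : ringChar F = 3 := by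
    have h1 : ringChar F ∣ 3 ^ n := by
      rw [← hcard, hFm]
      exact dvd_pow_self _ (by exact_mod_cast m.ne_zero)
    have h2 : ringChar F ∣ 3 := hp.dvd_of_dvd_pow h1
    exact (Nat.prime_dvd_prime_iff_eq hp (by norm_num)).mp h2
  haveI hFact3 : Fact (Nat.Prime 3) := ⟨by norm_num⟩
  haveI hC3 : CharP F 3 := by rw [← hr3]; infer_instance
  have h30 : (3 : F) = 0 := by exact_mod_cast CharP.cast_eq_zero F 3
  -- card mod 4
  have hcard4 : Fintype.card F % 4 = 3 := by
    obtain ⟨k, hk⟩ := hodd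
    subst hk
    rw [hcard]
    have h9 : (9 : ℕ) ^ k % 4 = 1 := by
      rw [Nat.pow_mod]; norm_num
    have hsplit : (3 : ℕ) ^ (2 * k + 1) = 9 ^ k * 3 := by
      rw [pow_succ, pow_mul]; norm_num
    rw [hsplit, Nat.mul_mod, h9]
  have hm1 : quadraticChar F (-1) = -1 := by
    rw [quadraticChar_neg_one_iff_not_isSquare, FiniteField.isSquare_neg_one_iff, hcard4]
    simp
  -- nonvanishing facts
  have hu0 : u ≠ 0 := by
    intro h; apply hu; rw [h]; norm_num
  have hu1 : u - 1 ≠ 0 := by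
    intro h; apply hu
    have : u = 1 := by linear_combination h
    rw [this]; norm_num
  have hup : u + 1 ≠ 0 := by
    intro h; apply hu
    have : u = -1 := by linear_combination h
    rw [this]; norm_num
  have hc0 : -(u + 1) ≠ 0 := neg_ne_zero.mpr hup
  have hu21 : u ^ 2 - 1 ≠ 0 := by
    intro h; apply hup
    rcases mul_eq_zero.mp (show (u - 1) * (u + 1) = 0 by linear_combination h) with h' | h'
    · exact absurd h' hu1
    · exact h'
  have hN : u * (u - 1) ^ 2 * (u + 1) ^ 3 ≠ 0 :=
    mul_ne_zero (mul_ne_zero hu0 (pow_ne_zero _ hu1)) (pow_ne_zero _ hup)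
  have hE : (u - 1) ^ 2 * (u * (u - 1) * (u + 1) ^ 3) ≠ 0 :=
    mul_ne_zero (pow_ne_zero _ hu1)
      (mul_ne_zero (mul_ne_zero hu0 hu1) (pow_ne_zero _ hup))
  -- product of characters
  have hprod : quadraticChar F (u + 1) * quadraticChar F (u - 1) = -1 := by
    rcases quadraticChar_dichotomy hup with h1 | h1 <;>
      rcases quadraticChar_dichotomy hu1 with h2 | h2
    · exact absurd (h1.trans h2.symm) huu
    · rw [h1, h2]; norm_num
    · rw [h1, h2]; norm_num
    · exact absurd (h1.trans h2.symm) huu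
  -- the common cubic sums
  -- J1 = ∑ χ(c·y(y²+(u+1)y+(-u²-u))),  J3 with cubed coefficients
  set J1 : ℤ := ∑ y : F, quadraticChar F
      (-(u + 1) * (y * (y ^ 2 + (u + 1) * y + (-u ^ 2 - u)))) with hJ1def
  set J3 : ℤ := ∑ y : F, quadraticChar F
      (-(u + 1) * (y * (y ^ 2 + (u + 1) ^ 3 * y + (-u ^ 2 - u) ^ 3))) with hJ3def
  -- Frobenius: J1 = J3
  have hfrob : J1 = J3 := by
    rw [hJ1def, hJ3def]
    have hbij : Function.Bijective (fun x : F => x ^ 3) := by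
      rw [Function.Bijective]
      constructor
      · intro a b hab
        have h3' : (a - b) ^ 3 = 0 := by
          rw [sub_pow_char]; simpa using sub_eq_zero.mpr hab
        have := pow_eq_zero_iff (n := 3) (by norm_num) |>.mp h3'
        exact sub_eq_zero.mp this
      · exact Finite.surjective_of_injective (fun a b hab => by
          have h3' : (a - b) ^ 3 = 0 := by
            rw [sub_pow_char]; simpa using sub_eq_zero.mpr hab
          have := pow_eq_zero_iff (n := 3) (by norm_num) |>.mp h3'
          exact sub_eq_zero.mp this)
    refine Fintype.sum_bijective (fun x : F => x ^ 3) hbij _ _ (fun x => ?_)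
    have hcube : (-(u + 1) * (x * (x ^ 2 + (u + 1) * x + (-u ^ 2 - u)))) ^ 3 =
        (-(u + 1)) ^ 2 * (-(u + 1) * (x ^ 3 * ((x ^ 3) ^ 2 + (u + 1) ^ 3 * x ^ 3
          + (-u ^ 2 - u) ^ 3))) := by
      linear_combination (-u^8*x^4 - 6*u^7*x^4 + 2*u^6*x^6 + u^6*x^5 - 15*u^6*x^4 + 10*u^5*x^6 + 5*u^5*x^5 - 20*u^5*x^4 - u^4*x^8 - u^4*x^7 + 20*u^4*x^6 + 10*u^4*x^5 - 15*u^4*x^4 - 4*u^3*x^8 - 4*u^3*x^7 + 20*u^3*x^6 + 10*u^3*x^5 - 6*u^3*x^4 - 6*u^2*x^8 - 6*u^2*x^7 + 10*u^2*x^6 + 5*u^2*x^5 - u^2*x^4 - 4*u*x^8 - 4*u*x^7 + 2*u*x^6 + u*x^5 - x^8 - x^7) * h30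
    calc quadraticChar F (-(u + 1) * (x * (x ^ 2 + (u + 1) * x + (-u ^ 2 - u))))
        = quadraticChar F ((-(u + 1) * (x * (x ^ 2 + (u + 1) * x + (-u ^ 2 - u)))) ^ 3) :=
          (chi_cube _).symm
      _ = quadraticChar F ((-(u + 1)) ^ 2 * (-(u + 1) * (x ^ 3 * ((x ^ 3) ^ 2
            + (u + 1) ^ 3 * x ^ 3 + (-u ^ 2 - u) ^ 3)))) := by rw [hcube]
      _ = quadraticChar F (-(u + 1) * (x ^ 3 * ((x ^ 3) ^ 2 + (u + 1) ^ 3 * x ^ 3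
            + (-u ^ 2 - u) ^ 3))) := chi_sq_mul _ _ hc0
  -- helpers for splitting sums
  have sum_univ_eq_erase : ∀ (a : F) (f : F → ℤ), f a = 0 →
      (∑ x : F, f x) = ∑ x ∈ univ.erase a, f x := by
    intro a f h
    exact (Finset.sum_erase Finset.univ h).symm
  have erase_sum_val : ∀ (a : F) (f : F → ℤ) (v : ℤ), f a = v →
      (∑ x ∈ univ.erase a, f x) = (∑ x : F, f x) - v := by
    intro a f v h
    rw [Finset.sum_erase_eq_sub (Finset.mem_univ a), h]
  -- Second sum: S2 = J1 - 1
  have hS2 : (∑ z : F, quadraticChar F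
      ((-(u + 1) * z) * (z * (z - 1 + u)) * (z ^ 2 - z + u ^ 2))) = J1 - 1 := by
    have h0 : quadraticChar F
        ((-(u + 1) * (0:F)) * ((0:F) * ((0:F) - 1 + u)) * ((0:F) ^ 2 - (0:F) + u ^ 2)) = 0 := by
      have he : (-(u + 1) * (0:F)) * ((0:F) * ((0:F) - 1 + u)) * ((0:F) ^ 2 - (0:F) + u ^ 2)
          = 0 := by ring
      rw [he, quadraticChar_zero]
    have hval0 : quadraticChar F
        (-(u + 1) * (((0:F) - 1 + u) * ((0:F) ^ 2 - (0:F) + u ^ 2))) = 1 := by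
      have he : -(u + 1) * (((0:F) - 1 + u) * ((0:F) ^ 2 - (0:F) + u ^ 2)) =
          u ^ 2 * (-1 * ((u + 1) * (u - 1))) := by ring
      rw [he, chi_sq_mul _ _ hu0, map_mul, map_mul, hm1, hprod]
      norm_num
    have hshift : (∑ z : F, quadraticChar F
        (-(u + 1) * ((z - 1 + u) * (z ^ 2 - z + u ^ 2)))) = J1 := by
      rw [hJ1def]
      refine (Fintype.sum_equiv (Equiv.addRight (1 - u)) _ _ (fun y => ?_)).symm
      simp only [Equiv.coe_addRight]
      refine congrArg _ ?_
      linear_combination (u^3*y - u^2*y^2 + u^2*y - u*y^2) * h30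
    calc (∑ z : F, quadraticChar F
        ((-(u + 1) * z) * (z * (z - 1 + u)) * (z ^ 2 - z + u ^ 2)))
        = ∑ z ∈ univ.erase (0:F), quadraticChar F
            ((-(u + 1) * z) * (z * (z - 1 + u)) * (z ^ 2 - z + u ^ 2)) :=
          sum_univ_eq_erase 0 _ h0
      _ = ∑ z ∈ univ.erase (0:F), quadraticChar F
            (-(u + 1) * ((z - 1 + u) * (z ^ 2 - z + u ^ 2))) := by
          refine Finset.sum_congr rfl (fun z hz => ?_)
          have hz0 : z ≠ 0 := (Finset.mem_erase.mp hz).1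
          have harg : (-(u + 1) * z) * (z * (z - 1 + u)) * (z ^ 2 - z + u ^ 2) =
              z ^ 2 * (-(u + 1) * ((z - 1 + u) * (z ^ 2 - z + u ^ 2))) := by ring
          rw [harg, chi_sq_mul _ _ hz0]
      _ = (∑ z : F, quadraticChar F
            (-(u + 1) * ((z - 1 + u) * (z ^ 2 - z + u ^ 2)))) - 1 :=
          erase_sum_val 0 _ 1 hval0
      _ = J1 - 1 := by rw [hshift]
  -- First sum: S1 = -J3 - 1
  have hS1 : (∑ z : F, quadraticChar F ((z * (z - 1 + u)) * (z ^ 2 - z + u ^ 2)))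
      = -J3 - 1 := by
    -- the transformed cubic summand
    have hmoeb : (∑ z ∈ univ.erase (1 - u : F), quadraticChar F
          ((z * (z - 1 + u)) * (z ^ 2 - z + u ^ 2))) =
        ∑ s ∈ univ.erase (0 : F), quadraticChar F
          ((1 + (1 - u) * s) * (1 + (u + 1) * s - (u ^ 2 + u) * s ^ 2)) := by
      refine Finset.sum_bij' (fun z _ => (z - (1 - u))⁻¹) (fun s _ => 1 - u + s⁻¹)
        ?_ ?_ ?_ ?_ ?_
      · intro z hz
        have hz1 : z - (1 - u) ≠ 0 := sub_ne_zero.mpr (Finset.mem_erase.mp hz).1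
        exact Finset.mem_erase.mpr ⟨inv_ne_zero hz1, Finset.mem_univ _⟩
      · intro s hs
        have hs0 : s ≠ 0 := (Finset.mem_erase.mp hs).1
        refine Finset.mem_erase.mpr ⟨?_, Finset.mem_univ _⟩
        intro hcontra
        exact inv_ne_zero hs0 (by linear_combination hcontra)
      · intro z hz
        have hz1 : z - (1 - u) ≠ 0 := sub_ne_zero.mpr (Finset.mem_erase.mp hz).1
        show 1 - u + ((z - (1 - u))⁻¹)⁻¹ = z
        rw [inv_inv]
        ring
      · intro s hs
        have hs0 : s ≠ 0 := (Finset.mem_erase.mp hs).1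
        show (1 - u + s⁻¹ - (1 - u))⁻¹ = s
        have he : 1 - u + s⁻¹ - (1 - u) = s⁻¹ := by ring
        rw [he, inv_inv]
      · intro z hz
        have hz1 : z - (1 - u) ≠ 0 := sub_ne_zero.mpr (Finset.mem_erase.mp hz).1
        set w : F := (z - (1 - u))⁻¹ with hw
        have hw0 : w ≠ 0 := inv_ne_zero hz1
        have hw1 : w * (z - (1 - u)) = 1 := inv_mul_cancel₀ hz1
        have hwz : w * z = 1 + (1 - u) * w := by linear_combination hw1
        refine chi_of_pow4 w hw0 ?_
        have h1 : w ^ 4 * ((z * (z - 1 + u)) * (z ^ 2 - z + u ^ 2)) =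
            (w * z) * ((w * z) + (u - 1) * w) *
              ((w * z) ^ 2 - w * (w * z) + u ^ 2 * w ^ 2) := by ring
        rw [h1, hwz]
        linear_combination (-u^3*w^3 + u^2*w^3 + 2*u^2*w^2 - u*w^2 - u*w) * h30
    -- evaluate the full sum of the transformed cubic via the affine change and J3
    have hbig : (∑ s : F, quadraticChar F
        ((1 + (1 - u) * s) * (1 + (u + 1) * s - (u ^ 2 + u) * s ^ 2))) = -J3 := by
      have hee_left : ∀ y : F,
          (u * (u - 1) ^ 2 * (u + 1) ^ 3 * (((u ^ 2 - 1) * y + u * (u - 1) * (u + 1) ^ 3)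
            * (u * (u - 1) ^ 2 * (u + 1) ^ 3)⁻¹) - u * (u - 1) * (u + 1) ^ 3)
            * (u ^ 2 - 1)⁻¹ = y := by
        intro y
        field_simp
        ring
      have hee_right : ∀ s : F,
          ((u ^ 2 - 1) * ((u * (u - 1) ^ 2 * (u + 1) ^ 3 * s - u * (u - 1) * (u + 1) ^ 3)
            * (u ^ 2 - 1)⁻¹) + u * (u - 1) * (u + 1) ^ 3)
            * (u * (u - 1) ^ 2 * (u + 1) ^ 3)⁻¹ = s := by
        intro s
        field_simp
        ring
      set ee : F ≃ F :=
        ⟨fun y => ((u ^ 2 - 1) * y + u * (u - 1) * (u + 1) ^ 3)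
            * (u * (u - 1) ^ 2 * (u + 1) ^ 3)⁻¹,
          fun s => (u * (u - 1) ^ 2 * (u + 1) ^ 3 * s - u * (u - 1) * (u + 1) ^ 3)
            * (u ^ 2 - 1)⁻¹,
          hee_left, hee_right⟩ with hee
      have hpt : ∀ y : F,
          - quadraticChar F (-(u + 1) * (y * (y ^ 2 + (u + 1) ^ 3 * y + (-u ^ 2 - u) ^ 3))) =
          quadraticChar F ((1 + (1 - u) * (ee y)) *
            (1 + (u + 1) * (ee y) - (u ^ 2 + u) * (ee y) ^ 2)) := by
        intro y
        have heey : ee y = ((u ^ 2 - 1) * y + u * (u - 1) * (u + 1) ^ 3)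
            * (u * (u - 1) ^ 2 * (u + 1) ^ 3)⁻¹ := rfl
        have hNA : u * (u - 1) ^ 2 * (u + 1) ^ 3 * (ee y) =
            (u ^ 2 - 1) * y + u * (u - 1) * (u + 1) ^ 3 := by
          rw [heey, mul_comm (((u ^ 2 - 1) * y + u * (u - 1) * (u + 1) ^ 3)),
            ← mul_assoc, mul_inv_cancel₀ hN, one_mul]
        have key : (u * (u - 1) ^ 2 * (u + 1) ^ 3) ^ 4 *
            ((1 + (1 - u) * (ee y)) * (1 + (u + 1) * (ee y) - (u ^ 2 + u) * (ee y) ^ 2)) =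
            (u * (u - 1) ^ 2 * (u + 1) ^ 3) *
              ((u * (u - 1) ^ 2 * (u + 1) ^ 3
                  + (1 - u) * (u * (u - 1) ^ 2 * (u + 1) ^ 3 * (ee y))) *
               ((u * (u - 1) ^ 2 * (u + 1) ^ 3) ^ 2
                  + (u + 1) * (u * (u - 1) ^ 2 * (u + 1) ^ 3 * (ee y))
                      * (u * (u - 1) ^ 2 * (u + 1) ^ 3)
                  - (u ^ 2 + u) * (u * (u - 1) ^ 2 * (u + 1) ^ 3 * (ee y)) ^ 2)) := by
          ring
        rw [hNA] at key
        have hstep1 := chi_of_pow4 (u * (u - 1) ^ 2 * (u + 1) ^ 3) hN key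
        have hD : (u * (u - 1) ^ 2 * (u + 1) ^ 3) *
              ((u * (u - 1) ^ 2 * (u + 1) ^ 3
                  + (1 - u) * ((u ^ 2 - 1) * y + u * (u - 1) * (u + 1) ^ 3)) *
               ((u * (u - 1) ^ 2 * (u + 1) ^ 3) ^ 2
                  + (u + 1) * ((u ^ 2 - 1) * y + u * (u - 1) * (u + 1) ^ 3)
                      * (u * (u - 1) ^ 2 * (u + 1) ^ 3)
                  - (u ^ 2 + u) * ((u ^ 2 - 1) * y + u * (u - 1) * (u + 1) ^ 3) ^ 2)) =
            ((u - 1) ^ 2 * (u * (u - 1) * (u + 1) ^ 3)) ^ 2 *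
              ((u + 1) * (y * (y ^ 2 + (u + 1) ^ 3 * y - (u ^ 2 + u) ^ 3))) := by
          linear_combination (u^20*y + 4*u^19*y - 20*u^17*y - 20*u^16*y + 36*u^15*y + 64*u^14*y - 20*u^13*y - 90*u^12*y - 20*u^11*y + 64*u^10*y + 36*u^9*y - 20*u^8*y - 20*u^7*y + 4*u^5*y + u^4*y) * h30
        have hstep2 : quadraticChar F ((1 + (1 - u) * (ee y)) *
            (1 + (u + 1) * (ee y) - (u ^ 2 + u) * (ee y) ^ 2)) =
            quadraticChar F ((u + 1) * (y * (y ^ 2 + (u + 1) ^ 3 * y - (u ^ 2 + u) ^ 3))) := by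
          rw [hstep1, hD, chi_sq_mul _ _ hE]
        have hneg : -(u + 1) * (y * (y ^ 2 + (u + 1) ^ 3 * y + (-u ^ 2 - u) ^ 3)) =
            -1 * ((u + 1) * (y * (y ^ 2 + (u + 1) ^ 3 * y - (u ^ 2 + u) ^ 3))) := by
          ring
        rw [hstep2, hneg, map_mul, hm1]
        ring
      rw [hJ3def, ← Finset.sum_neg_distrib]
      exact (Fintype.sum_equiv ee _ _ hpt).symm
    have h1u : quadraticChar F
        (((1 - u) * ((1 - u) - 1 + u)) * ((1 - u) ^ 2 - (1 - u) + u ^ 2)) = 0 := by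
      have he : ((1 - u) * ((1 - u) - 1 + u)) * ((1 - u) ^ 2 - (1 - u) + u ^ 2) = 0 := by
        ring
      rw [he, quadraticChar_zero]
    have hC0 : quadraticChar F
        ((1 + (1 - u) * (0:F)) * (1 + (u + 1) * (0:F) - (u ^ 2 + u) * (0:F) ^ 2)) = 1 := by
      have he : (1 + (1 - u) * (0:F)) * (1 + (u + 1) * (0:F) - (u ^ 2 + u) * (0:F) ^ 2)
          = 1 := by ring
      rw [he, map_one]
    calc (∑ z : F, quadraticChar F ((z * (z - 1 + u)) * (z ^ 2 - z + u ^ 2)))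
        = ∑ z ∈ univ.erase (1 - u : F), quadraticChar F
            ((z * (z - 1 + u)) * (z ^ 2 - z + u ^ 2)) := sum_univ_eq_erase (1 - u) _ h1u
      _ = ∑ s ∈ univ.erase (0 : F), quadraticChar F
            ((1 + (1 - u) * s) * (1 + (u + 1) * s - (u ^ 2 + u) * s ^ 2)) := hmoeb
      _ = (∑ s : F, quadraticChar F
            ((1 + (1 - u) * s) * (1 + (u + 1) * s - (u ^ 2 + u) * s ^ 2))) - 1 :=
          erase_sum_val 0 _ 1 hC0
      _ = -J3 - 1 := by rw [hbig]
  rw [hS1, hS2, hfrob]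
  ring
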